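/- arXiv:1605.07162 — 3 statements merged into one kernel-verified Lean document; each statement's English description precedes it below -/
import Mathlib

section
/- Let M be a matroid on ground set S with injective weight function μ, and let I be a basis of M. Then I is the maximum-weight basis of M if and only if for every e ∈ S \ I, the set I^{≥μ(e)} = {x ∈ I : μ(x) ≥ μ(e)} blocks e. -/
open Matroid Set

variable {α : Type*}

/-- The `ℕ∞`-valued rank of a set `X` in a matroid `M`:
the supremum of the sizes of independent subsets of `X`. -/
noncomputable def Matroid.eRank' (M : Matroid α) (X : Set α) : ℕ∞ :=
  ⨆ I ∈ {I | M.Indep I ∧ I ⊆ X}, I.encard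

/-- A set `A` *blocks* an element `e` if adding `e` to `A` does not increase the rank. -/
def Matroid.Blocks (M : Matroid α) (A : Set α) (e : α) : Prop :=
  M.eRank' (insert e A) = M.eRank' A

/-- The total weight of a set of elements. -/
noncomputable def wt (μ : α → ℝ) (I : Set α) : ℝ := ∑ᶠ e ∈ I, μ e

/-- `I` is a maximum-weight base of `M` with respect to the weight function `μ`. -/
def IsMaxWeightBase (M : Matroid α) (μ : α → ℝ) (I : Set α) : Prop :=
  M.IsBase I ∧ ∀ J, M.IsBase J → wt μ J ≤ wt μ I

/-- The modified cost function `μ_{I,ε}` adding `ε` to the weight of each element of `I`. -/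
noncomputable def modCost (μ : α → ℝ) (I : Set α) (ε : ℝ) : α → ℝ :=
  fun e => μ e + I.indicator (fun _ => ε) e

/-- `I` is an `ε`-optimal base of `M` w.r.t. `μ`:
it is a maximum-weight base for the modified cost `μ_{I,ε}`. -/
def EpsOptimal (M : Matroid α) (μ : α → ℝ) (ε : ℝ) (I : Set α) : Prop :=
  IsMaxWeightBase M (modCost μ I ε) I

/-- Contraction of a matroid, defined by duality: `M ／ C = (M✶ ↾ (M.E \ C))✶`. -/
noncomputable def Matroid.contract' (M : Matroid α) (C : Set α) : Matroid α :=
  (M✶ ↾ (M.E \ C))✶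

/-- The weight of a maximum-weight base of `M` with respect to `μ`. -/
noncomputable def OPTval (M : Matroid α) (μ : α → ℝ) : ℝ :=
  sSup ((fun B => wt μ B) '' {B | M.IsBase B})

lemma eRank'_eq_encard_of_basis' {M : Matroid α} {J X : Set α} (hJ : M.IsBasis' J X) :
    M.eRank' X = J.encard := by
  refine le_antisymm (iSup₂_le fun K hK => ?_) (le_iSup₂ (f := fun I _ => I.encard) J ⟨hJ.indep, hJ.subset⟩)
  obtain ⟨K', hK', hKK'⟩ := hK.1.subset_isBasis'_of_subset hK.2
  exact (encard_mono hKK').trans_eq (hK'.encard_eq_encard hJ)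

lemma blocks_iff_mem_closure {M : Matroid α} [M.Finite] {X : Set α} {e : α}
    (hX : X ⊆ M.E) (he : e ∈ M.E) :
    M.Blocks X e ↔ e ∈ M.closure X := by
  obtain ⟨J, hJ⟩ := M.exists_isBasis X hX
  constructor
  · intro hb
    by_contra hecl
    have heJ : M.Indep (insert e J) := by
      rw [hJ.indep.insert_indep_iff]
      exact Or.inl ⟨he, by rwa [hJ.closure_eq_closure]⟩
    have h1 : (insert e J).encard ≤ M.eRank' (insert e X) :=
      le_iSup₂ (f := fun I _ => I.encard) (insert e J)
        ⟨heJ, insert_subset_insert hJ.subset⟩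
    rw [hb, eRank'_eq_encard_of_basis' hJ.isBasis'] at h1
    have heJ' : e ∉ J := fun h => hecl (M.subset_closure X hX (hJ.subset h))
    rw [encard_insert_of_notMem heJ'] at h1
    have hfin : J.Finite := M.set_finite J hJ.indep.subset_ground
    exact (ENat.add_one_le_iff hfin.encard_lt_top.ne).mp h1 |>.false
  · intro hecl
    have hJ' : M.IsBasis J (insert e X) :=
      hJ.indep.isBasis_of_subset_of_subset_closure (hJ.subset.trans (subset_insert _ _))
        (insert_subset (by rwa [hJ.closure_eq_closure]) hJ.subset_closure)
    rw [Matroid.Blocks, eRank'_eq_encard_of_basis' hJ'.isBasis',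
      eRank'_eq_encard_of_basis' hJ.isBasis']

lemma wt_exchange {μ : α → ℝ} {A : Set α} {e f : α} (hA : A.Finite) (hf : f ∈ A) (he : e ∉ A) :
    wt μ (insert e (A \ {f})) = wt μ A + μ e - μ f := by
  have h1 : wt μ (insert e (A \ {f})) = μ e + wt μ (A \ {f}) :=
    finsum_mem_insert μ (fun h => he h.1) (hA.diff)
  have h2 : wt μ A = μ f + wt μ (A \ {f}) := by
    have hAeq : A = insert f (A \ {f}) := by
      rw [insert_diff_singleton, insert_eq_self.mpr hf]
    nth_rw 1 [hAeq]
    exact finsum_mem_insert μ (fun h => h.2 rfl) (hA.diff)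
  rw [h1, h2]; ring

/-- A base `I` is the maximum-weight base iff every `e ∈ S \ I` is blocked by the
elements of `I` of weight at least `μ e`. -/
theorem isMaxWeightBase_iff_blocks (M : Matroid α) [M.Finite] (μ : α → ℝ)
    (hinj : Set.InjOn μ M.E) (hpos : ∀ e ∈ M.E, 0 < μ e)
    (I : Set α) (hI : M.IsBase I) :
    IsMaxWeightBase M μ I ↔ ∀ e ∈ M.E \ I, M.Blocks {x ∈ I | μ e ≤ μ x} e := by
  have hIE := hI.subset_ground
  constructor
  · rintro ⟨-, hmax⟩ e ⟨heE, heI⟩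
    have hDI : {x ∈ I | μ e ≤ μ x} ⊆ I := fun x hx => hx.1
    rw [blocks_iff_mem_closure (hDI.trans hIE) heE]
    by_contra hecl
    have hDind : M.Indep {x ∈ I | μ e ≤ μ x} := hI.indep.subset hDI
    have heD : M.Indep (insert e {x ∈ I | μ e ≤ μ x}) := by
      rw [hDind.insert_indep_iff]
      exact Or.inl ⟨heE, hecl⟩
    obtain ⟨B, hB, hsub⟩ := heD.subset_isBasis_of_subset (insert_subset_insert hDI)
      (insert_subset heE hIE)
    have hBbase : M.IsBase B := hB.indep.isBase_of_ground_subset_closure (by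
      rw [hB.closure_eq_closure, ← hI.closure_eq]
      exact M.closure_subset_closure (subset_insert e I))
    have heB : e ∈ B := hsub (mem_insert _ _)
    have hBdiff : B \ I = {e} := by
      apply Subset.antisymm
      · rintro x ⟨hxB, hxI⟩
        rcases hB.subset hxB with h | h
        · exact h
        · exact absurd h hxI
      · exact singleton_subset_iff.mpr ⟨heB, heI⟩
    have hIBd : (I \ B).encard = 1 := by
      rw [hI.encard_sdiff_comm hBbase, hBdiff, encard_singleton]
    obtain ⟨f, hf⟩ := encard_eq_one.mp hIBd
    have hfmem : f ∈ I \ B := by rw [hf]; exact rfl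
    have hBeq : B = insert e (I \ {f}) := by
      apply Subset.antisymm
      · intro x hxB
        rcases hB.subset hxB with h | h
        · exact h ▸ mem_insert _ _
        · exact Or.inr ⟨h, fun hxf => hfmem.2 (hxf ▸ hxB)⟩
      · rintro x (rfl | ⟨hxI, hxf⟩)
        · exact heB
        · by_contra hxB
          have hx : x ∈ I \ B := ⟨hxI, hxB⟩
          rw [hf] at hx
          exact hxf hx
    have hwt := hmax B hBbase
    rw [hBeq, wt_exchange (M.set_finite I hIE) hfmem.1 heI] at hwt
    have hmuef : μ e ≤ μ f := by linarith
    exact hfmem.2 (hsub (subset_insert _ _ ⟨hfmem.1, hmuef⟩))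
  · intro hbl
    refine ⟨hI, fun K hK => ?_⟩
    have hSfin : {B | M.IsBase B}.Finite :=
      (M.ground_finite.finite_subsets).subset (fun B hB => hB.subset_ground)
    obtain ⟨J, hJmem, hJmax'⟩ := Set.Finite.exists_maximalFor (wt μ) _ hSfin ⟨I, hI⟩
    have hJb : M.IsBase J := hJmem
    have hJmax : ∀ B, M.IsBase B → wt μ B ≤ wt μ J := by
      intro B hB
      rcases le_total (wt μ B) (wt μ J) with h | h
      · exact h
      · exact hJmax' hB h
    suffices hJI : J = I by rw [← hJI]; exact hJmax K hK
    by_contra hne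
    have hex : (J \ I).Nonempty := by
      rw [nonempty_iff_ne_empty]
      intro hempty
      exact hne (hJb.eq_of_subset_isBase hI (diff_eq_empty.mp hempty))
    obtain ⟨e, heJ, heI⟩ := hex
    have heE : e ∈ M.E := hJb.subset_ground heJ
    have hbl' := hbl e ⟨heE, heI⟩
    rw [blocks_iff_mem_closure (fun x hx => hIE hx.1) heE] at hbl'
    have hnotall : ¬ ({x ∈ I | μ e ≤ μ x} ⊆ M.closure (J \ {e})) := by
      intro hsub
      exact hJb.indep.notMem_closure_sdiff_of_mem heJ
        (M.closure_subset_closure_of_subset_closure hsub hbl')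
    obtain ⟨f, hfD, hfcl⟩ := not_subset.mp hnotall
    have hfI : f ∈ I := hfD.1
    have hfe : f ≠ e := fun h => heI (h ▸ hfI)
    have hfJ : f ∉ J := fun hfJ =>
      hfcl (M.subset_closure _ (fun x hx => hJb.subset_ground hx.1) ⟨hfJ, hfe⟩)
    have hJd : M.Indep (J \ {e}) := hJb.indep.subset diff_subset
    have hBind : M.Indep (insert f (J \ {e})) := by
      rw [hJd.insert_indep_iff]
      exact Or.inl ⟨hIE hfI, hfcl⟩
    obtain ⟨B, hB, hsub⟩ := hBind.exists_isBase_superset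
    have hcard : B.encard = (insert f (J \ {e})).encard := by
      rw [hB.encard_eq_encard_of_isBase hJb,
        encard_insert_of_notMem (fun h => hfJ h.1),
        encard_diff_singleton_add_one heJ]
    have hBeq : B = insert f (J \ {e}) :=
      (((M.set_finite B hB.subset_ground).subset hsub).eq_of_subset_of_encard_le hsub hcard.le).symm
    have hwt : wt μ B = wt μ J + μ f - μ e := by
      rw [hBeq]; exact wt_exchange (M.set_finite J hJb.subset_ground) heJ hfJ
    have h1 : wt μ B ≤ wt μ J := hJmax B hB
    have h2 : μ e ≤ μ f := hfD.2
    have h3 : μ f ≠ μ e := fun h => hfe (hinj (hIE hfI) heE h)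
    have h4 : μ e < μ f := lt_of_le_of_ne h2 h3.symm
    linarith
end

section
/- If A is an ε-approximate subset of B witnessed by an independent set I ⊆ A that is ε-optimal for M|B, then for every e ∈ B \ A, both I^{≥ μ(e) − ε} and A^{≥ μ(e) − ε} block e. -/
open Matroid Set

variable {α : Type*}

lemma wt_insert (μ : α → ℝ) {a : α} {s : Set α} (h : a ∉ s) (hs : s.Finite) :
    wt μ (insert a s) = μ a + wt μ s := by
  simpa [wt] using finsum_mem_insert μ h hs

lemma blocks_of_mem_closure (M : Matroid α) [M.Finite] {X : Set α} (hX : X ⊆ M.E)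
    {e : α} (he : e ∈ M.closure X) : M.Blocks X e := by
  refine le_antisymm ?_ ?_
  · refine iSup₂_le fun J hJ => ?_
    obtain ⟨hJind, hJsub⟩ := hJ
    by_cases heJ : e ∈ J
    · set J0 := J \ {e} with hJ0
      have hJ0ind : M.Indep J0 := hJind.subset diff_subset
      have hJ0X : J0 ⊆ X := by
        intro x hx
        rcases hJsub hx.1 with h | h
        · exact absurd h hx.2
        · exact h
      obtain ⟨J', hJ', hJ0J'⟩ := hJ0ind.subset_isBasis_of_subset hJ0X hX
      have heJ' : e ∈ M.closure J' := by rwa [hJ'.closure_eq_closure]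
      have hne : J0 ≠ J' := by
        rintro rfl
        have hJeq : insert e J0 = J := by simp [hJ0, insert_diff_singleton, insert_eq_of_mem heJ]
        have : M.Indep (insert e J0) := hJeq ▸ hJind
        have := (hJ0ind.insert_indep_iff_of_notMem (by simp [hJ0])).1 this
        exact this.2 heJ'
      have hJ'fin : J'.Finite := M.set_finite J' hJ'.indep.subset_ground
      have hlt : J0.encard < J'.encard :=
        (hJ'fin.subset hJ0J').encard_lt_encard (ssubset_of_subset_of_ne hJ0J' hne)
      have hJeq : J.encard = J0.encard + 1 := (encard_diff_singleton_add_one heJ).symm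
      have : J.encard ≤ J'.encard := by
        rw [hJeq]
        exact (ENat.add_one_le_iff (M.set_finite J0 (hJ0ind.subset_ground)).encard_lt_top.ne).2 hlt
      exact le_trans this (le_iSup₂_of_le J' ⟨hJ'.indep, hJ'.subset⟩ le_rfl)
    · exact le_iSup₂_of_le J ⟨hJind, fun x hx => ((hJsub hx).resolve_left
        (fun h => heJ (h ▸ hx)))⟩ le_rfl
  · exact iSup₂_le fun J hJ => le_iSup₂_of_le J ⟨hJ.1, hJ.2.trans (subset_insert _ _)⟩ le_rfl

/-- If `I ⊆ A` is an independent set witnessing that `A` is an `ε`-approximate subset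
of `B`, then every `e ∈ B \ A` is blocked both by `I^{≥ μ e − ε}` and by
`A^{≥ μ e − ε}`. -/
theorem approxSubset_blocks (M : Matroid α) [M.Finite] (μ : α → ℝ)
    (hpos : ∀ e ∈ M.E, 0 < μ e) (ε : ℝ) (hε : 0 < ε)
    (A B : Set α) (hAB : A ⊆ B) (hB : B ⊆ M.E)
    (I : Set α) (hIA : I ⊆ A) (hIind : (M ↾ A).Indep I)
    (hopt : EpsOptimal (M ↾ B) μ ε I) :
    ∀ e ∈ B \ A,
      M.Blocks {x ∈ I | μ e - ε ≤ μ x} e ∧ M.Blocks {x ∈ A | μ e - ε ≤ μ x} e := by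
  intro e he
  set r := μ e - ε with hr
  set Ir := {x ∈ I | r ≤ μ x} with hIr
  set Ar := {x ∈ A | r ≤ μ x} with hAr
  have hMI : M.Indep I := ((M.restrict_indep_iff).1 hIind).1
  have hIE : I ⊆ M.E := hMI.subset_ground
  have heE : e ∈ M.E := hB he.1
  have heI : e ∉ I := fun h => he.2 (hIA h)
  have hIrI : Ir ⊆ I := sep_subset _ _
  have hIrE : Ir ⊆ M.E := hIrI.trans hIE
  have hArE : Ar ⊆ M.E := (sep_subset _ _).trans ((hAB.trans hB))
  -- the key claim
  have hclIr : e ∈ M.closure Ir := by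
    by_contra hcl
    have hIrind : M.Indep Ir := hMI.subset hIrI
    have heIr : e ∉ Ir := fun h => heI (hIrI h)
    have hins : M.Indep (insert e Ir) :=
      (hIrind.insert_indep_iff_of_notMem heIr).2 ⟨heE, hcl⟩
    have hinsB : (M ↾ B).Indep (insert e Ir) :=
      (M.restrict_indep_iff).2 ⟨hins, insert_subset he.1 ((hIrI.trans hIA).trans hAB)⟩
    have hIbase : (M ↾ B).IsBase I := hopt.1
    obtain ⟨B', hB'base, hsub1, hsub2⟩ := Indep.exists_isBase_subset_union_isBase hinsB hIbase
    have hsub2' : B' ⊆ insert e I := by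
      refine hsub2.trans ?_
      rw [union_subset_iff]
      exact ⟨insert_subset_insert hIrI, (subset_insert _ _)⟩
    have heB' : e ∈ B' := hsub1 (mem_insert _ _)
    set D := B' \ {e} with hD
    have hDI : D ⊆ I := by
      intro x hx
      exact (hsub2' hx.1).resolve_left hx.2
    have heD : e ∉ D := by simp [hD]
    have hB'eq : B' = insert e D := by
      rw [hD, insert_diff_singleton, insert_eq_of_mem heB']
    have hIfin : I.Finite := M.set_finite I hIE
    have hDfin : D.Finite := hIfin.subset hDI
    have hcard : B'.encard = I.encard := hB'base.encard_eq_encard_of_isBase hIbase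
    have hone : (I \ D).encard = 1 := by
      have h1 : (I \ D).encard + D.encard = I.encard := encard_diff_add_encard_of_subset hDI
      have h2 : I.encard = D.encard + 1 := by
        rw [← hcard, hB'eq, encard_insert_of_notMem heD, add_comm]
      rw [h2, add_comm D.encard 1] at h1
      exact WithTop.add_right_cancel hDfin.encard_lt_top.ne h1
    obtain ⟨f, hf⟩ := encard_eq_one.1 hone
    have hfI : f ∈ I := by
      have : f ∈ I \ D := hf ▸ rfl
      exact this.1
    have hfD : f ∉ D := by
      have : f ∈ I \ D := hf ▸ rfl
      exact this.2
    have hDeq : D = I \ {f} := by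
      rw [← hf, diff_diff_cancel_left hDI]
    have hIeq : I = insert f D := by
      rw [hDeq, insert_diff_singleton, insert_eq_of_mem hfI]
    have hIrD : Ir ⊆ D := by
      intro x hx
      exact ⟨hsub1 (mem_insert_of_mem _ hx), fun h => heIr (h ▸ hx)⟩
    have hfIr : f ∉ Ir := fun h => hfD (hIrD h)
    have hflt : μ f < r := by
      by_contra hge
      exact hfIr ⟨hfI, not_lt.1 hge⟩
    -- weight comparison
    have hle : wt (modCost μ I ε) B' ≤ wt (modCost μ I ε) I := hopt.2 B' hB'base
    have h1 : wt (modCost μ I ε) (insert f D) = modCost μ I ε f + wt (modCost μ I ε) D :=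
      wt_insert _ hfD hDfin
    rw [← hIeq] at h1
    rw [hB'eq, wt_insert _ heD hDfin, h1] at hle
    have hle' : modCost μ I ε e ≤ modCost μ I ε f := by linarith
    have hνe : modCost μ I ε e = μ e := by simp [modCost, indicator_of_notMem heI]
    have hνf : modCost μ I ε f = μ f + ε := by simp [modCost, indicator_of_mem hfI]
    rw [hνe, hνf] at hle'
    have : r ≤ μ f := by rw [hr]; linarith
    exact absurd this (not_le.2 hflt)
  have hIrAr : Ir ⊆ Ar := fun x hx => ⟨hIA hx.1, hx.2⟩
  have hclAr : e ∈ M.closure Ar := M.closure_subset_closure hIrAr hclIr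
  exact ⟨blocks_of_mem_closure M hIrE hclIr, blocks_of_mem_closure M hArE hclAr⟩
end

section
/- Let M be a matroid on ground set S with injective cost function μ. Sample a random subset F ⊆ S by including each element independently with probability p. Call an element e ∈ S F-good if F^{>μ(e)} does not block e, and F-bad otherwise. Then the number of F-good elements in S is stochastically dominated by a negative binomial random variable NegBin(rank(M); p). -/
open Matroid Set

variable {α : Type*}

open MeasureTheory ProbabilityTheory
open scoped ENNReal

section AuxRank

variable {α : Type*} {M : Matroid α} {C X Y I : Set α} {e : α}

lemma eRank'_eq_encard_of_basis (hX : X ⊆ M.E) (hI : M.IsBasis I X) : M.eRank' X = I.encard := by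
  apply le_antisymm
  · refine iSup₂_le fun J hJ => ?_
    obtain ⟨J', hJ', hsub⟩ := hJ.1.subset_isBasis_of_subset hJ.2 hX
    exact (Set.encard_mono hsub).trans (hJ'.encard_eq_encard hI).le
  · exact le_iSup₂_of_le I ⟨hI.indep, hI.subset⟩ le_rfl

lemma eRank'_mono (h : X ⊆ Y) : M.eRank' X ≤ M.eRank' Y :=
  iSup₂_le fun J hJ => le_iSup₂_of_le J ⟨hJ.1, hJ.2.trans h⟩ le_rfl

lemma eRank'_lt_top [Fintype α] : M.eRank' X < ⊤ :=
  lt_of_le_of_lt (iSup₂_le fun J _ => Set.encard_mono (Set.subset_univ J))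
    Set.finite_univ.encard_lt_top

lemma eRank'_insert_of_mem_closure (hX : X ⊆ M.E) (he : e ∈ M.closure X) :
    M.eRank' (insert e X) = M.eRank' X := by
  obtain ⟨I, hI⟩ := M.exists_isBasis X hX
  have heE : e ∈ M.E := M.closure_subset_ground X he
  have hI' : M.IsBasis I (insert e X) := by
    rw [isBasis_iff_indep_closure]
    exact ⟨hI.indep, insert_subset (hI.closure_eq_closure ▸ he) hI.subset_closure,
      hI.subset.trans (subset_insert _ _)⟩
  rw [eRank'_eq_encard_of_basis (insert_subset heE hX) hI', eRank'_eq_encard_of_basis hX hI]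

lemma eRank'_insert_of_not_mem_closure (hX : X ⊆ M.E) (heE : e ∈ M.E)
    (he : e ∉ M.closure X) : M.eRank' (insert e X) = M.eRank' X + 1 := by
  obtain ⟨I, hI⟩ := M.exists_isBasis X hX
  have heX : e ∉ X := fun h => he (M.mem_closure_of_mem' h heE)
  have heI : e ∉ I := fun h => heX (hI.subset h)
  have hecl : e ∉ M.closure I := by rw [hI.closure_eq_closure]; exact he
  have hind : M.Indep (insert e I) := by
    rw [hI.indep.insert_indep_iff_of_notMem heI]; exact ⟨heE, hecl⟩
  have hI' : M.IsBasis (insert e I) (insert e X) := by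
    rw [isBasis_iff_indep_closure]
    refine ⟨hind, insert_subset ?_ ?_, insert_subset_insert hI.subset⟩
    · exact M.subset_closure _ hind.subset_ground (mem_insert e I)
    · exact hI.subset_closure.trans (M.closure_subset_closure (subset_insert _ _))
  rw [eRank'_eq_encard_of_basis (insert_subset heE hX) hI', eRank'_eq_encard_of_basis hX hI,
    Set.encard_insert_of_notMem heI]

end AuxRank

lemma blocks_iff {α : Type*} [Fintype α] {M : Matroid α} (hE : M.E = Set.univ)
    {A : Set α} {e : α} :
    M.Blocks A e ↔ e ∈ M.closure A := by
  have hA : A ⊆ M.E := hE ▸ Set.subset_univ A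
  have heE : e ∈ M.E := hE ▸ Set.mem_univ e
  constructor
  · intro h
    by_contra hcl
    rw [Matroid.Blocks, eRank'_insert_of_not_mem_closure hA heE hcl] at h
    exact (ENat.add_one_le_iff (LT.lt.ne eRank'_lt_top)).mp h.le |>.false
  · intro h
    exact eRank'_insert_of_mem_closure hA h

open Classical in
noncomputable def goodCnt {α : Type*} (M : Matroid α) : Set α → List α → (α → Bool) → ℕ
  | _, [], _ => 0
  | C, e :: L, σ =>
    (if e ∈ M.closure C then 0 else 1) + goodCnt M (if σ e then insert e C else C) L σ

lemma goodCnt_congr {α : Type*} (M : Matroid α) :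
    ∀ (L : List α) (C : Set α) (σ σ' : α → Bool), (∀ x ∈ L, σ x = σ' x) →
      goodCnt M C L σ = goodCnt M C L σ'
  | [], _, _, _, _ => rfl
  | e :: L, C, σ, σ', h => by
    rw [goodCnt, goodCnt, h e List.mem_cons_self,
      goodCnt_congr M L _ σ σ' (fun x hx => h x (List.mem_cons_of_mem e hx))]

noncomputable def Gfun (wp wq : ℝ≥0∞) (k r : ℕ) : ℝ≥0∞ :=
  ∑ j ∈ Finset.range k, (r.choose j : ℝ≥0∞) * wp ^ j * wq ^ (r - j)

lemma Gfun_zero_left {wp wq : ℝ≥0∞} (r : ℕ) : Gfun wp wq 0 r = 0 := by simp [Gfun]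

lemma Gfun_zero_right {wp wq : ℝ≥0∞} {k : ℕ} (hk : 0 < k) : Gfun wp wq k 0 = 1 := by
  rw [Gfun, Finset.sum_eq_single 0]
  · simp
  · intro j hj hj0
    rw [Nat.choose_eq_zero_of_lt (Nat.pos_of_ne_zero hj0)]
    simp
  · intro h; exact absurd (Finset.mem_range.mpr hk) h

lemma Gfun_pascal {wp wq : ℝ≥0∞} (k r : ℕ) :
    Gfun wp wq (k+1) (r+1) = wp * Gfun wp wq k r + wq * Gfun wp wq (k+1) r := by
  have key : ∀ i : ℕ, ((r+1).choose (i+1) : ℝ≥0∞) * wp ^ (i+1) * wq ^ (r+1-(i+1)) =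
      wp * ((r.choose i : ℝ≥0∞) * wp ^ i * wq ^ (r - i)) +
        wq * ((r.choose (i+1) : ℝ≥0∞) * wp ^ (i+1) * wq ^ (r - (i+1))) := by
    intro i
    rw [Nat.choose_succ_succ, Nat.cast_add, Nat.succ_sub_succ]
    rcases le_or_gt (i+1) r with h | h
    · have h1 : r - i = (r - (i+1)) + 1 := by omega
      rw [h1]; ring
    · have hb : r.choose (i+1) = 0 := Nat.choose_eq_zero_of_lt h
      have h1 : r - i = 0 := by omega
      have h2 : r - (i+1) = 0 := by omega
      rw [hb, h1, h2]; push_cast; ring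
  have e1 : Gfun wp wq (k+1) (r+1)
      = ∑ i ∈ Finset.range k,
          (wp * ((r.choose i : ℝ≥0∞) * wp ^ i * wq ^ (r - i)) +
            wq * ((r.choose (i+1) : ℝ≥0∞) * wp ^ (i+1) * wq ^ (r - (i+1)))) + wq ^ (r+1) := by
    rw [Gfun, Finset.sum_range_succ']
    congr 1
    · exact Finset.sum_congr rfl fun i _ => key i
    · simp
  have e2 : Gfun wp wq (k+1) r
      = ∑ i ∈ Finset.range k,
          ((r.choose (i+1) : ℝ≥0∞) * wp ^ (i+1) * wq ^ (r - (i+1))) + wq ^ r := by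
    rw [Gfun, Finset.sum_range_succ']
    congr 1
    simp
  rw [e1, Finset.sum_add_distrib, ← Finset.mul_sum, ← Finset.mul_sum, e2, mul_add, ← Gfun]
  ring

lemma goodCnt_eq_filter {α : Type*} (M : Matroid α) (μw : α → ℝ) (σ : α → Bool) (q : α → Bool)
    (hq : ∀ f, q f = true ↔ f ∉ M.closure {x | σ x = true ∧ μw f < μw x}) :
    ∀ (L : List α) (C : Set α),
      List.Pairwise (fun a b => μw b < μw a) L →
      (∀ x ∈ C, σ x = true ∧ ∀ f ∈ L, μw f < μw x) →
      (∀ x, σ x = true → x ∈ C ∨ x ∈ L) →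
      goodCnt M C L σ = (L.filter q).length
  | [], C, _, _, _ => rfl
  | e :: L, C, hpw, hC, hcov => by
    obtain ⟨hhead, htail⟩ := List.pairwise_cons.mp hpw
    have hset : {x | σ x = true ∧ μw e < μw x} = C := by
      ext x
      constructor
      · rintro ⟨hσx, hlt⟩
        rcases hcov x hσx with hxC | hxL
        · exact hxC
        rcases List.mem_cons.mp hxL with rfl | hxL'
        · exact absurd hlt (lt_irrefl _)
        · exact absurd hlt (not_lt_of_gt (hhead x hxL'))
      · intro hxC
        exact ⟨(hC x hxC).1, (hC x hxC).2 e List.mem_cons_self⟩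
    have hCnew : ∀ x ∈ (if σ e then insert e C else C : Set α),
        σ x = true ∧ ∀ f ∈ L, μw f < μw x := by
      intro x hx
      by_cases hσe : σ e
      · rw [if_pos hσe] at hx
        rcases hx with rfl | hxC
        · exact ⟨hσe, hhead⟩
        · exact ⟨(hC x hxC).1, fun f hf => (hC x hxC).2 f (List.mem_cons_of_mem e hf)⟩
      · rw [if_neg hσe] at hx
        exact ⟨(hC x hx).1, fun f hf => (hC x hx).2 f (List.mem_cons_of_mem e hf)⟩
    have hcovnew : ∀ x, σ x = true → x ∈ (if σ e then insert e C else C : Set α) ∨ x ∈ L := by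
      intro x hσx
      rcases hcov x hσx with hxC | hxL
      · left; split <;> [exact Set.mem_insert_of_mem e hxC; exact hxC]
      rcases List.mem_cons.mp hxL with rfl | hxL'
      · left; rw [if_pos hσx]; exact Set.mem_insert x C
      · right; exact hxL'
    rw [goodCnt, goodCnt_eq_filter M μw σ q hq L _ htail hCnew hcovnew, List.filter_cons]
    by_cases hcl : e ∈ M.closure C
    · have : q e = false := by
        rw [← Bool.not_eq_true, hq e, hset]; simp [hcl]
      simp [hcl, this, Nat.add_comm]
    · have : q e = true := by rw [hq e, hset]; exact hcl
      simp [hcl, this, Nat.add_comm]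

lemma measurableSet_boolFun {ι : Type*} [Finite ι] (S : Set (ι → Bool)) : MeasurableSet S := by
  have h : S = ⋃ v ∈ S, {v} := by simp
  rw [h]
  refine MeasurableSet.biUnion (Set.to_countable S) (fun v _ => ?_)
  have h2 : ({v} : Set (ι → Bool)) = ⋂ i, (fun g : ι → Bool => g i) ⁻¹' {v i} := by
    ext g; simp [funext_iff, eq_comm]
  rw [h2]
  exact MeasurableSet.iInter fun i => (measurable_pi_apply i) (measurableSet_singleton _)

lemma indep_split {α : Type*} [Fintype α] [DecidableEq α] {Ω : Type*} [MeasurableSpace Ω] (P : Measure Ω)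
    (M : Matroid α)
    (X : α → Ω → Bool) (hmeas : ∀ e, Measurable (X e))
    (hindep : iIndepFun X P)
    (e : α) (L : List α) (he : e ∉ L) (C : Set α) (r : ℕ) (b : Bool) :
    P ({ω | X e ω = b} ∩ {ω | r < goodCnt M C L (fun f => X f ω)}) =
      P {ω | X e ω = b} * P {ω | r < goodCnt M C L (fun f => X f ω)} := by
  set T : Finset α := L.toFinset with hT
  set g : Ω → (T → Bool) := fun ω i => X i.1 ω with hg
  have hdisj : Disjoint ({e} : Finset α) T := by
    simp only [Finset.disjoint_singleton_left, hT, List.mem_toFinset]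
    exact he
  have h1 := hindep.indepFun_finset {e} T hdisj hmeas
  have hge : IndepFun (X e) g P := by
    have := h1.comp (φ := fun v : (({e} : Finset α) → Bool) => v ⟨e, Finset.mem_singleton_self e⟩)
      (ψ := id) (show Measurable (fun v : (({e} : Finset α) → Bool) => v ⟨e, Finset.mem_singleton_self e⟩) from measurable_pi_apply _) measurable_id
    exact this
  set S : Set (T → Bool) :=
    {v | r < goodCnt M C L (fun f => if h : f ∈ T then v ⟨f, h⟩ else false)} with hS
  have hBeq : {ω | r < goodCnt M C L (fun f => X f ω)} = g ⁻¹' S := by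
    ext ω
    simp only [Set.mem_setOf_eq, Set.mem_preimage, hS, hg]
    rw [goodCnt_congr M L C (fun f => X f ω)
      (fun f => if h : f ∈ T then X f ω else false)
      (fun f hf => by simp [hT, hf])]
  have happ : {ω | X e ω = b} = X e ⁻¹' {b} := rfl
  rw [hBeq, happ]
  exact hge.meas_inter ⟨{b}, measurableSet_singleton b, rfl⟩ ⟨S, measurableSet_boolFun S, rfl⟩

lemma main_ind {α : Type*} [Fintype α] [DecidableEq α] {Ω : Type*} [MeasurableSpace Ω]
    (P : Measure Ω) [IsProbabilityMeasure P]
    (M : Matroid α) (hE : M.E = Set.univ)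
    (p : ℝ) (hp1 : p ≤ 1)
    (X : α → Ω → Bool) (hmeas : ∀ e, Measurable (X e))
    (hindep : iIndepFun X P)
    (hpe : ∀ e, P {ω | X e ω = true} = ENNReal.ofReal p) :
    ∀ (L : List α), L.Nodup → ∀ (C : Set α) (k r : ℕ),
      M.eRank' Set.univ ≤ M.eRank' C + k →
      P {ω | r < goodCnt M C L (fun f => X f ω)} ≤
        Gfun (ENNReal.ofReal p) (1 - ENNReal.ofReal p) k r := by
  intro L
  induction L with
  | nil =>
    intro _ C k r _
    have h0 : {ω : Ω | r < goodCnt M C (List.nil) (fun f => X f ω)} = ∅ := by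
      ext ω; simp [goodCnt]
    rw [h0]; simp
  | cons e L IH =>
    intro hnd C k r hk
    obtain ⟨heL, hndL⟩ := List.nodup_cons.mp hnd
    set wp := ENNReal.ofReal p with hwp
    set wq := 1 - wp with hwq
    have hwp1 : wp ≤ 1 := ENNReal.ofReal_le_one.mpr hp1
    have hwpwq : wp + wq = 1 := by
      rw [hwq, add_comm]; exact tsub_add_cancel_of_le hwp1
    have hmt : MeasurableSet {ω | X e ω = true} :=
      (hmeas e) (measurableSet_singleton true)
    have hXeF : P {ω | X e ω = false} = wq := by
      have hc : {ω | X e ω = false} = {ω | X e ω = true}ᶜ := by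
        ext ω; simp
      rw [hc, measure_compl hmt (measure_ne_top P _), measure_univ, hpe e]
    have hCE : C ⊆ M.E := hE ▸ Set.subset_univ C
    have heE : e ∈ M.E := hE ▸ Set.mem_univ e
    by_cases hcl : e ∈ M.closure C
    · -- e is blocked already: count unchanged
      have hsplit : {ω | r < goodCnt M C (e :: L) (fun f => X f ω)} =
          ({ω | X e ω = true} ∩ {ω | r < goodCnt M (insert e C) L (fun f => X f ω)}) ∪
          ({ω | X e ω = false} ∩ {ω | r < goodCnt M C L (fun f => X f ω)}) := by
        ext ω
        simp only [Set.mem_setOf_eq, Set.mem_union, Set.mem_inter_iff, goodCnt, if_pos hcl]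
        rcases Bool.eq_false_or_eq_true (X e ω) with h | h <;> simp [h]
      have hk' : M.eRank' Set.univ ≤ M.eRank' (insert e C) + k := by
        rwa [eRank'_insert_of_mem_closure hCE hcl]
      calc P {ω | r < goodCnt M C (e :: L) (fun f => X f ω)}
          ≤ P ({ω | X e ω = true} ∩ {ω | r < goodCnt M (insert e C) L (fun f => X f ω)}) +
            P ({ω | X e ω = false} ∩ {ω | r < goodCnt M C L (fun f => X f ω)}) := by
            rw [hsplit]; exact measure_union_le _ _
        _ = wp * P {ω | r < goodCnt M (insert e C) L (fun f => X f ω)} +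
            wq * P {ω | r < goodCnt M C L (fun f => X f ω)} := by
            rw [indep_split P M X hmeas hindep e L heL _ r true,
              indep_split P M X hmeas hindep e L heL _ r false, hpe e, hXeF]
        _ ≤ wp * Gfun wp wq k r + wq * Gfun wp wq k r := by
            gcongr
            · exact IH hndL (insert e C) k r hk'
            · exact IH hndL C k r hk
        _ = Gfun wp wq k r := by rw [← add_mul, hwpwq, one_mul]
    · -- e is good
      rcases k with _ | k'
      · exfalso
        have h1 : M.eRank' C + 1 ≤ M.eRank' Set.univ := by
          rw [← eRank'_insert_of_not_mem_closure hCE heE hcl]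
          exact eRank'_mono (Set.subset_univ _)
        have h2 : M.eRank' C + 1 ≤ M.eRank' C := by
          refine h1.trans ?_; simpa using hk
        exact absurd ((ENat.add_one_le_iff eRank'_lt_top.ne).mp h2) (lt_irrefl _)
      rcases r with _ | r'
      · rw [Gfun_zero_right (Nat.succ_pos k')]
        exact prob_le_one
      · have hsplit : {ω | r' + 1 < goodCnt M C (e :: L) (fun f => X f ω)} =
            ({ω | X e ω = true} ∩ {ω | r' < goodCnt M (insert e C) L (fun f => X f ω)}) ∪
            ({ω | X e ω = false} ∩ {ω | r' < goodCnt M C L (fun f => X f ω)}) := by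
          ext ω
          simp only [Set.mem_setOf_eq, Set.mem_union, Set.mem_inter_iff, goodCnt, if_neg hcl]
          rcases Bool.eq_false_or_eq_true (X e ω) with h | h <;> simp [h] <;> omega
        have hk' : M.eRank' Set.univ ≤ M.eRank' (insert e C) + k' := by
          rw [eRank'_insert_of_not_mem_closure hCE heE hcl]
          calc M.eRank' Set.univ ≤ M.eRank' C + (k' + 1 : ℕ) := hk
            _ = M.eRank' C + 1 + k' := by push_cast; ring
        calc P {ω | r' + 1 < goodCnt M C (e :: L) (fun f => X f ω)}
            ≤ P ({ω | X e ω = true} ∩ {ω | r' < goodCnt M (insert e C) L (fun f => X f ω)}) +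
              P ({ω | X e ω = false} ∩ {ω | r' < goodCnt M C L (fun f => X f ω)}) := by
              rw [hsplit]; exact measure_union_le _ _
          _ = wp * P {ω | r' < goodCnt M (insert e C) L (fun f => X f ω)} +
              wq * P {ω | r' < goodCnt M C L (fun f => X f ω)} := by
              rw [indep_split P M X hmeas hindep e L heL _ r' true,
                indep_split P M X hmeas hindep e L heL _ r' false, hpe e, hXeF]
          _ ≤ wp * Gfun wp wq k' r' + wq * Gfun wp wq (k' + 1) r' := by
              gcongr
              · exact IH hndL (insert e C) k' r' hk'
              · exact IH hndL C (k' + 1) r' hk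
          _ = Gfun wp wq (k' + 1) (r' + 1) := (Gfun_pascal k' r').symm

lemma Gfun_eq_ofReal {p : ℝ} (hp0 : 0 ≤ p) (hp1 : p ≤ 1) (k r : ℕ) :
    Gfun (ENNReal.ofReal p) (1 - ENNReal.ofReal p) k r =
      ENNReal.ofReal (∑ j ∈ Finset.range k, (r.choose j : ℝ) * p ^ j * (1 - p) ^ (r - j)) := by
  have hq : (1 : ℝ≥0∞) - ENNReal.ofReal p = ENNReal.ofReal (1 - p) := by
    rw [← ENNReal.ofReal_one, ← ENNReal.ofReal_sub 1 hp0]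
  have hq0 : 0 ≤ 1 - p := by linarith
  rw [hq, Gfun, ENNReal.ofReal_sum_of_nonneg (fun j _ => by positivity)]
  refine Finset.sum_congr rfl fun j _ => ?_
  rw [ENNReal.ofReal_mul (by positivity), ENNReal.ofReal_mul (by positivity),
    ENNReal.ofReal_pow hp0, ENNReal.ofReal_pow hq0, ENNReal.ofReal_natCast]

/-- Sampling-and-pruning lemma (Karger–Klein–Tarjan): if `F` is a random subset of the
ground set obtained by including each element independently with probability `p`, then
the number of `F`-good elements (elements `e` such that `F^{> μ e}` does not block `e`)
is stochastically dominated by `NegBin(rank M; p)`, i.e. for every `r`,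
`Pr[#good > r] ≤ Pr[NegBin(k;p) > r] = Pr[Bin(r;p) < k] = ∑_{j<k} C(r,j) pʲ (1−p)^{r−j}`. -/
theorem good_elements_dominated {α : Type*} [Fintype α]
    {Ω : Type*} [MeasurableSpace Ω] (P : Measure Ω) [IsProbabilityMeasure P]
    (M : Matroid α) (hE : M.E = Set.univ)
    (k : ℕ) (hrank : ∀ B, M.IsBase B → B.encard = (k : ℕ∞))
    (μw : α → ℝ) (hinj : Function.Injective μw) (hpos : ∀ e, 0 < μw e)
    (p : ℝ) (hp0 : 0 ≤ p) (hp1 : p ≤ 1)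
    (X : α → Ω → Bool) (hmeas : ∀ e, Measurable (X e))
    (hindep : iIndepFun X P)
    (hpe : ∀ e, P {ω | X e ω = true} = ENNReal.ofReal p)
    (good : α → Ω → Prop)
    (hgood : ∀ e ω, good e ω ↔ ¬ M.Blocks {x | X x ω = true ∧ μw e < μw x} e)
    (r : ℕ) :
    P {ω | (r : ℕ∞) < {e | good e ω}.encard} ≤
      ENNReal.ofReal
        (∑ j ∈ Finset.range k, (r.choose j : ℝ) * p ^ j * (1 - p) ^ (r - j)) := by
  classical
  -- reduce to the list/counting formulation
  let rel : α → α → Prop := fun a b => μw b ≤ μw a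
  haveI : DecidableRel rel := fun a b => Classical.propDecidable _
  haveI : IsTrans α rel := ⟨fun _ _ _ h1 h2 => le_trans h2 h1⟩
  haveI : Std.Antisymm rel := ⟨fun _ _ h1 h2 => hinj (le_antisymm h2 h1)⟩
  haveI : Std.Total rel := ⟨fun a b => (le_total (μw b) (μw a)).imp id id⟩
  set L : List α := Finset.sort Finset.univ rel with hL
  have hnd : L.Nodup := Finset.sort_nodup _ rel
  have hmemL : ∀ x : α, x ∈ L := fun x => (Finset.mem_sort (r := rel)).mpr (Finset.mem_univ x)
  have hsorted : List.Pairwise rel L := Finset.pairwise_sort _ rel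
  have hpw : L.Pairwise (fun a b => μw b < μw a) :=
    (hsorted.and hnd).imp fun h => lt_of_le_of_ne h.1 fun hev => h.2 (hinj hev.symm)
  have hsetω : ∀ ω, ((r : ℕ∞) < {e | good e ω}.encard ↔
      r < goodCnt M ∅ L (fun f => X f ω)) := by
    intro ω
    set q : α → Bool := fun f =>
      decide (f ∉ M.closure {x | X x ω = true ∧ μw f < μw x}) with hqdef
    have hq : ∀ f, q f = true ↔ f ∉ M.closure {x | X x ω = true ∧ μw f < μw x} := fun f => by
      simp [hqdef]
    have hcnt : goodCnt M ∅ L (fun f => X f ω) = (L.filter q).length :=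
      goodCnt_eq_filter M μw _ q hq L ∅ hpw (by simp) (fun x _ => Or.inr (hmemL x))
    have hgset : {e | good e ω} = {x | x ∈ L.filter q} := by
      ext x
      rw [Set.mem_setOf_eq, hgood x ω, Set.mem_setOf_eq, List.mem_filter]
      rw [blocks_iff hE]
      simp [hmemL x, hq]
    have hencard : {e | good e ω}.encard = ((L.filter q).length : ℕ∞) := by
      rw [hgset, ← List.coe_toFinset, Set.encard_coe_eq_coe_finsetCard,
        List.toFinset_card_of_nodup (hnd.filter q)]
    rw [hencard, hcnt, Nat.cast_lt]
  have hsets : {ω | (r : ℕ∞) < {e | good e ω}.encard} =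
      {ω | r < goodCnt M ∅ L (fun f => X f ω)} := Set.ext fun ω => hsetω ω
  have hk0 : M.eRank' Set.univ ≤ M.eRank' ∅ + k := by
    obtain ⟨B, hB⟩ := M.exists_isBase
    have h1 : M.eRank' Set.univ = (k : ℕ∞) := by
      rw [← hE, eRank'_eq_encard_of_basis subset_rfl hB.isBasis_ground, hrank B hB]
    rw [h1]
    exact le_add_self
  rw [hsets, ← Gfun_eq_ofReal hp0 hp1 k r]
  exact main_ind P M hE p hp1 X hmeas hindep hpe L hnd ∅ k r hk0
end
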